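/- Fix a real number q > 1. For all integers n ≥ 1, α, and x ≥ 1, the recursion vol_{n,α}(x) = Σ_{β=0}^{n} binom(n,β)_q · q^{α(n−β)} · vol_{n−β, α+β}(x−1) holds. -/

import Mathlib

open Finset

noncomputable section

/-- `μ_m := ∏_{i=1}^{m} (1 − q⁻¹)/(1 − q^{-i})`. -/
def mu (q : ℝ) (m : ℕ) : ℝ :=
  ∏ i ∈ Finset.range m, (1 - q⁻¹) / (1 - q ^ (-((i : ℤ) + 1)))

/-- For a weakly increasing tuple `λ`, the product `∏_j μ_{n_j}` over the lengths
`(n_1, …, n_s)` of the maximal constant segments of `λ` (equivalently, over the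
cardinalities of the fibers of `λ`). -/
def typeProd (q : ℝ) {n : ℕ} (l : Fin n → ℤ) : ℝ :=
  ∏ v ∈ Finset.image l Finset.univ, mu q ((Finset.univ.filter fun i => l i = v).card)

/-- The weight `w_n(λ) := ((∏_j μ_{n_j})/μ_n) · ∏_{i<j} q^{λ_j − λ_i}`. -/
def weight (q : ℝ) {n : ℕ} (l : Fin n → ℤ) : ℝ :=
  (typeProd q l / mu q n) *
    ∏ p ∈ Finset.univ.filter (fun p : Fin n × Fin n => p.1 < p.2), q ^ (l p.2 - l p.1)

open scoped Classical in
/-- The weakly increasing integer tuples `0 ≤ λ_1 ≤ ⋯ ≤ λ_n ≤ x`. -/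
def tuples (n x : ℕ) : Finset (Fin n → ℤ) :=
  (Fintype.piFinset fun _ : Fin n => Finset.Icc (0 : ℤ) (x : ℤ)).filter Monotone

/-- `vol_{n,α}(x) := Σ_{0 ≤ λ_1 ≤ ⋯ ≤ λ_n ≤ x} q^{α(λ_1+⋯+λ_n)} · w_n(λ)`
(for `n = 0` this is `1` by convention, the sum being over the single empty tuple). -/
def vol (q : ℝ) (n : ℕ) (α : ℤ) (x : ℕ) : ℝ :=
  ∑ l ∈ tuples n x, q ^ (α * ∑ i, l i) * weight q l

/-- The Gaussian binomial coefficient `∏_{i=1}^{β} (q^{n−β+i} − 1)/(q^{i} − 1)`. -/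
def gaussBinom (q : ℝ) (n β : ℕ) : ℝ :=
  ∏ i ∈ Finset.range β, (q ^ (n - β + i + 1) - 1) / (q ^ (i + 1) - 1)

/-- Evaluation of a finitely supported family of coefficients `c : ℕ × ℕ → ℝ` as the
`q`-quasi-polynomial `x ↦ Σ_{(a,b)} c(a,b) · q^{a·x} · x^{b}`. -/
def qQuasiEval (q : ℝ) (c : (ℕ × ℕ) →₀ ℝ) (x : ℕ) : ℝ :=
  c.sum fun p r => r * q ^ (p.1 * x) * (x : ℝ) ^ p.2

end

open scoped Classical

namespace VolRec

/-! ### basic facts about `q` and `mu` -/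

lemma one_sub_zpow_pos {q : ℝ} (hq : 1 < q) (z : ℤ) (hz : z < 0) :
    0 < 1 - q ^ z := by
  have h0 : (0:ℝ) < q := lt_trans one_pos hq
  have h1 : q ^ z < q ^ (0:ℤ) := zpow_lt_zpow_right₀ hq hz
  rw [zpow_zero] at h1
  linarith

lemma mu_pos {q : ℝ} (hq : 1 < q) (m : ℕ) : 0 < mu q m := by
  have h0 : (0:ℝ) < q := lt_trans one_pos hq
  apply Finset.prod_pos
  intro i _
  apply div_pos
  · have : q⁻¹ < 1 := inv_lt_one_of_one_lt₀ hq
    linarith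
  · exact one_sub_zpow_pos hq _ (by omega)

lemma mu_ne {q : ℝ} (hq : 1 < q) (m : ℕ) : mu q m ≠ 0 := ne_of_gt (mu_pos hq m)

lemma mu_zero (q : ℝ) : mu q 0 = 1 := by simp [mu]

lemma prod_zpow_sum {q : ℝ} (hq : q ≠ 0) {ι : Type*} (s : Finset ι) (f : ι → ℤ) :
    ∏ i ∈ s, q ^ f i = q ^ (∑ i ∈ s, f i) := by
  induction s using Finset.cons_induction with
  | empty => simp
  | cons a s ha ih => rw [Finset.prod_cons, Finset.sum_cons, ih, ← zpow_add₀ hq]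

/-! ### counting lemmas on `Fin n` -/

lemma card_filter_val_lt {n β : ℕ} (hβ : β ≤ n) :
    ((Finset.univ : Finset (Fin n)).filter fun j : Fin n => (j : ℕ) < β).card = β := by
  have : ((Finset.univ : Finset (Fin n)).filter fun j : Fin n => (j : ℕ) < β)
      = Finset.map (Fin.castLEEmb hβ) Finset.univ := by
    ext j
    simp only [Finset.mem_filter, Finset.mem_map, Finset.mem_univ, true_and]
    constructor
    · intro h; exact ⟨⟨(j : ℕ), h⟩, Fin.ext rfl⟩
    · rintro ⟨k, rfl⟩; simpa using k.isLt
  rw [this, Finset.card_map, Finset.card_univ, Fintype.card_fin]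

lemma sum_split {M : Type*} [AddCommMonoid M] {n β : ℕ} (hβ : β ≤ n) (g : Fin n → M) :
    ∑ j, g j = (∑ j ∈ Finset.univ.filter (fun j : Fin n => (j : ℕ) < β), g j)
      + ∑ k : Fin (n - β), g ⟨β + (k : ℕ), by omega⟩ := by
  rw [← Finset.sum_filter_add_sum_filter_not Finset.univ (fun j : Fin n => (j : ℕ) < β) g]
  congr 1
  refine Finset.sum_bij' (i := fun (j : Fin n) (hj : j ∈ Finset.univ.filter
      (fun j : Fin n => ¬ (j : ℕ) < β)) => (⟨(j : ℕ) - β, by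
        simp only [Finset.mem_filter] at hj; omega⟩ : Fin (n - β)))
    (j := fun (k : Fin (n - β)) _ => (⟨β + (k : ℕ), by omega⟩ : Fin n))
    (fun a ha => by simp) (fun a ha => by
      simp only [Finset.mem_filter, Finset.mem_univ, true_and]; omega)
    (fun a ha => by
      simp only [Finset.mem_filter] at ha
      exact Fin.ext (by simp; omega))
    (fun a ha => Fin.ext (by simp))
    (fun a ha => by
      simp only [Finset.mem_filter] at ha
      congr 1
      exact Fin.ext (by simp; omega))

/-! ### the linear form of the pair sum -/

def S {n : ℕ} (l : Fin n → ℤ) : ℤ :=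
  ∑ p ∈ Finset.univ.filter (fun p : Fin n × Fin n => p.1 < p.2), (l p.2 - l p.1)

lemma pairProd_eq {q : ℝ} (hq : q ≠ 0) {n : ℕ} (l : Fin n → ℤ) :
    ∏ p ∈ Finset.univ.filter (fun p : Fin n × Fin n => p.1 < p.2), q ^ (l p.2 - l p.1)
      = q ^ S l := prod_zpow_sum hq _ _

lemma card_filter_lt_fin {n : ℕ} (j : Fin n) :
    (Finset.univ.filter fun i : Fin n => i < j).card = (j : ℕ) := by
  rw [show (Finset.univ.filter fun i : Fin n => i < j)
      = Finset.univ.filter (fun i : Fin n => (i : ℕ) < (j : ℕ)) by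
    apply Finset.filter_congr; intro i _; exact Iff.rfl]
  exact card_filter_val_lt (le_of_lt j.isLt)

lemma card_filter_gt_fin {n : ℕ} (i : Fin n) :
    (Finset.univ.filter fun j : Fin n => i < j).card = n - ((i : ℕ) + 1) := by
  have he : (Finset.univ.filter fun j : Fin n => i < j)
      = Finset.univ.filter (fun j : Fin n => ¬ (j : ℕ) < (i : ℕ) + 1) := by
    apply Finset.filter_congr; intro k _; rw [Fin.lt_def]; omega
  have h2 := Finset.card_filter_add_card_filter_not
    (s := (Finset.univ : Finset (Fin n))) (p := fun j : Fin n => (j : ℕ) < (i : ℕ) + 1)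
  rw [card_filter_val_lt (by omega : (i : ℕ) + 1 ≤ n)] at h2
  rw [he]
  simp only [Finset.card_univ, Fintype.card_fin] at h2
  omega

lemma S_linear {n : ℕ} (l : Fin n → ℤ) :
    S l = ∑ j : Fin n, (2 * (j : ℤ) + 1 - n) * l j := by
  rw [S, Finset.sum_filter, Fintype.sum_prod_type]
  have step : ∀ i j : Fin n, (if i < j then l j - l i else 0)
      = (if i < j then l j else 0) - (if i < j then l i else 0) := by
    intro i j; split <;> simp
  simp only [step]
  rw [Finset.sum_congr rfl (fun i _ => Finset.sum_sub_distrib _ _), Finset.sum_sub_distrib]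
  have T2 : (∑ i : Fin n, ∑ j : Fin n, if i < j then l j else 0)
      = ∑ j : Fin n, ((j : ℕ) : ℤ) * l j := by
    rw [Finset.sum_comm]
    refine Finset.sum_congr rfl fun j _ => ?_
    rw [← Finset.sum_filter, Finset.sum_const, card_filter_lt_fin, nsmul_eq_mul]
  have T1 : (∑ i : Fin n, ∑ j : Fin n, if i < j then l i else 0)
      = ∑ i : Fin n, ((n - ((i : ℕ) + 1) : ℕ) : ℤ) * l i := by
    refine Finset.sum_congr rfl fun i _ => ?_
    rw [← Finset.sum_filter, Finset.sum_const, card_filter_gt_fin, nsmul_eq_mul]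
  rw [T1, T2, ← Finset.sum_sub_distrib]
  refine Finset.sum_congr rfl fun j _ => ?_
  have hj : (j : ℕ) + 1 ≤ n := j.isLt
  rw [Nat.cast_sub hj]
  push_cast
  ring

/-! ### the extension map -/

def ext {n : ℕ} (β : ℕ) (hβ : β ≤ n) (l' : Fin (n - β) → ℤ) : Fin n → ℤ :=
  fun j => if h : (j : ℕ) < β then 0 else l' ⟨(j : ℕ) - β, by omega⟩ + 1

lemma ext_lt {n β : ℕ} (hβ : β ≤ n) (l' : Fin (n - β) → ℤ) (j : Fin n) (h : (j : ℕ) < β) :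
    ext β hβ l' j = 0 := dif_pos h

lemma ext_ge {n β : ℕ} (hβ : β ≤ n) (l' : Fin (n - β) → ℤ) (k : Fin (n - β)) :
    ext β hβ l' ⟨β + (k : ℕ), by omega⟩ = l' k + 1 := by
  rw [ext, dif_neg (by simp)]
  congr 2
  exact Fin.ext (by simp)

lemma ext_ge' {n β : ℕ} (hβ : β ≤ n) (l' : Fin (n - β) → ℤ) (j : Fin n) (h : ¬ (j : ℕ) < β) :
    ext β hβ l' j = l' ⟨(j : ℕ) - β, by omega⟩ + 1 := dif_neg h

/-! ### membership facts -/

lemma mem_tuples {n x : ℕ} {l : Fin n → ℤ} :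
    l ∈ tuples n x ↔ (∀ i, 0 ≤ l i ∧ l i ≤ (x : ℤ)) ∧ Monotone l := by
  unfold tuples
  rw [Finset.mem_filter, Fintype.mem_piFinset]
  simp only [Finset.mem_Icc]

def Z {n : ℕ} (l : Fin n → ℤ) : ℕ := (Finset.univ.filter fun i => l i = 0).card

lemma Z_le {n : ℕ} (l : Fin n → ℤ) : Z l ≤ n := by
  have := Finset.card_filter_le Finset.univ (fun i : Fin n => l i = 0)
  simpa [Z] using this

lemma zero_iff {n : ℕ} {l : Fin n → ℤ} (hm : Monotone l) (h0 : ∀ i, 0 ≤ l i) (j : Fin n) :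
    l j = 0 ↔ (j : ℕ) < Z l := by
  constructor
  · intro hj
    have hsub : (Finset.univ.filter fun i : Fin n => (i : ℕ) < (j : ℕ) + 1)
        ⊆ Finset.univ.filter (fun i : Fin n => l i = 0) := by
      intro i hi
      simp only [Finset.mem_filter, Finset.mem_univ, true_and] at hi ⊢
      have hij : i ≤ j := by rw [Fin.le_def]; omega
      have h1 := hm hij
      have h2 := h0 i
      omega
    have hc := Finset.card_le_card hsub
    rw [card_filter_val_lt (by omega : (j : ℕ) + 1 ≤ n)] at hc
    unfold Z; omega
  · intro hj
    by_contra hne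
    have hsub : (Finset.univ.filter fun i : Fin n => l i = 0)
        ⊆ Finset.univ.filter (fun i : Fin n => (i : ℕ) < (j : ℕ)) := by
      intro i hi
      simp only [Finset.mem_filter, Finset.mem_univ, true_and] at hi ⊢
      by_contra hge
      have hji : j ≤ i := by rw [Fin.le_def]; omega
      have h1 := hm hji
      have h2 := h0 j
      omega
    have hc := Finset.card_le_card hsub
    rw [card_filter_val_lt (le_of_lt j.isLt)] at hc
    unfold Z at hj; omega

lemma ext_eq_zero_iff {n β : ℕ} (hβ : β ≤ n) (l' : Fin (n - β) → ℤ)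
    (hl'0 : ∀ k, 0 ≤ l' k) (j : Fin n) :
    ext β hβ l' j = 0 ↔ (j : ℕ) < β := by
  by_cases h : (j : ℕ) < β
  · simp [ext_lt hβ l' j h, h]
  · rw [ext_ge' hβ l' j h]
    have := hl'0 ⟨(j : ℕ) - β, by omega⟩
    constructor
    · intro hc; omega
    · intro hc; omega

lemma Z_ext {n β : ℕ} (hβ : β ≤ n) (l' : Fin (n - β) → ℤ) (hl'0 : ∀ k, 0 ≤ l' k) :
    Z (ext β hβ l') = β := by
  unfold Z
  rw [show (Finset.univ.filter fun j : Fin n => ext β hβ l' j = 0)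
      = Finset.univ.filter (fun j : Fin n => (j : ℕ) < β) from
    Finset.filter_congr (fun j _ => by rw [ext_eq_zero_iff hβ l' hl'0 j])]
  exact card_filter_val_lt hβ

lemma ext_mem {n β x : ℕ} (hβ : β ≤ n) (hx : 1 ≤ x) {l' : Fin (n - β) → ℤ}
    (hl' : l' ∈ tuples (n - β) (x - 1)) : ext β hβ l' ∈ tuples n x := by
  obtain ⟨hb, hm⟩ := mem_tuples.mp hl'
  rw [mem_tuples]
  constructor
  · intro j
    by_cases h : (j : ℕ) < β
    · rw [ext_lt hβ l' j h]
      refine ⟨le_refl 0, by positivity⟩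
    · rw [ext_ge' hβ l' j h]
      have h1 := (hb ⟨(j : ℕ) - β, by omega⟩).1
      have h2 := (hb ⟨(j : ℕ) - β, by omega⟩).2
      omega
  · intro i j hij
    rw [Fin.le_def] at hij
    by_cases hi : (i : ℕ) < β
    · rw [ext_lt hβ l' i hi]
      by_cases hj : (j : ℕ) < β
      · rw [ext_lt hβ l' j hj]
      · rw [ext_ge' hβ l' j hj]
        have := (hb ⟨(j : ℕ) - β, by omega⟩).1
        omega
    · have hj : ¬ (j : ℕ) < β := by omega
      rw [ext_ge' hβ l' i hi, ext_ge' hβ l' j hj]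
      have := hm (show (⟨(i : ℕ) - β, by omega⟩ : Fin (n - β)) ≤ ⟨(j : ℕ) - β, by omega⟩ by
        rw [Fin.le_def]; simp; omega)
      omega

/-! ### sum of the extension -/

lemma ext_sum {n β : ℕ} (hβ : β ≤ n) (l' : Fin (n - β) → ℤ) :
    ∑ j, ext β hβ l' j = (∑ k, l' k) + ((n - β : ℕ) : ℤ) := by
  rw [sum_split hβ (ext β hβ l')]
  rw [Finset.sum_eq_zero (fun j hj => ext_lt hβ l' j (by
    simpa using (Finset.mem_filter.mp hj).2)), zero_add]
  rw [Finset.sum_congr rfl (fun k _ => ext_ge hβ l' k), Finset.sum_add_distrib]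
  simp

/-! ### pair sum of the extension -/

lemma sum_two_add_one (m : ℕ) : ∑ k ∈ Finset.range m, (2 * (k : ℤ) + 1) = (m : ℤ) ^ 2 := by
  induction m with
  | zero => simp
  | succ p ih => rw [Finset.sum_range_succ, ih]; push_cast; ring

lemma S_ext {n β : ℕ} (hβ : β ≤ n) (l' : Fin (n - β) → ℤ) :
    S (ext β hβ l') = S l' + (β : ℤ) * (∑ k, l' k) + (β : ℤ) * ((n : ℤ) - β) := by
  have hmc : ((n - β : ℕ) : ℤ) = (n : ℤ) - β := Nat.cast_sub hβ
  rw [S_linear (ext β hβ l'), S_linear l']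
  rw [sum_split hβ (fun j : Fin n => (2 * (j : ℤ) + 1 - n) * ext β hβ l' j)]
  rw [Finset.sum_eq_zero (fun j hj => by
    rw [ext_lt hβ l' j (by simpa using (Finset.mem_filter.mp hj).2), mul_zero]), zero_add]
  have hterm : ∀ k : Fin (n - β),
      (2 * ((⟨β + (k : ℕ), by omega⟩ : Fin n) : ℤ) + 1 - n) * ext β hβ l' ⟨β + (k : ℕ), by omega⟩
      = ((2 * (k : ℤ) + 1 - ((n - β : ℕ) : ℤ)) * l' k + (β : ℤ) * l' k)
        + ((2 * (k : ℤ) + 1 - ((n - β : ℕ) : ℤ)) + β) := by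
    intro k
    rw [ext_ge hβ l' k]
    have hv : ((⟨β + (k : ℕ), by omega⟩ : Fin n) : ℤ) = (β : ℤ) + (k : ℤ) := by
      simp
    rw [hv, hmc]
    ring
  have hz : (∑ k : Fin (n - β), (2 * (k : ℤ) + 1 - ((n - β : ℕ) : ℤ)))
      = 0 := by
    rw [Finset.sum_sub_distrib, Finset.sum_const, Finset.card_univ, Fintype.card_fin]
    rw [Fin.sum_univ_eq_sum_range (fun i => 2 * (i : ℤ) + 1) (n - β), sum_two_add_one]
    rw [nsmul_eq_mul]
    ring
  rw [Finset.sum_congr rfl (fun k _ => hterm k), Finset.sum_add_distrib,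
    Finset.sum_add_distrib, Finset.sum_add_distrib]
  rw [← Finset.mul_sum, hz, zero_add, Finset.sum_const, Finset.card_univ,
    Fintype.card_fin, nsmul_eq_mul, hmc]
  ring

/-! ### typeProd of the extension -/

lemma fib_card {n β : ℕ} (hβ : β ≤ n) (l' : Fin (n - β) → ℤ) (v : ℤ) (hv : 0 ≤ v) :
    (Finset.univ.filter fun j : Fin n => ext β hβ l' j = v + 1).card
      = (Finset.univ.filter fun k : Fin (n - β) => l' k = v).card := by
  refine Finset.card_bij'
    (i := fun (j : Fin n) (hj : j ∈ Finset.univ.filter fun j : Fin n => ext β hβ l' j = v + 1) =>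
      (⟨(j : ℕ) - β, by
        simp only [Finset.mem_filter, Finset.mem_univ, true_and] at hj
        by_contra hc
        have hjβ : (j : ℕ) < β := by omega
        rw [ext_lt hβ l' j hjβ] at hj
        omega⟩ : Fin (n - β)))
    (j := fun (k : Fin (n - β)) _ => (⟨β + (k : ℕ), by omega⟩ : Fin n))
    ?_ ?_ ?_ ?_
  · intro a ha
    simp only [Finset.mem_filter, Finset.mem_univ, true_and] at ha ⊢
    have haβ : ¬ (a : ℕ) < β := by
      by_contra hc
      rw [ext_lt hβ l' a hc] at ha
      omega
    rw [ext_ge' hβ l' a haβ] at ha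
    omega
  · intro a ha
    simp only [Finset.mem_filter, Finset.mem_univ, true_and] at ha ⊢
    rw [ext_ge hβ l' a, ha]
  · intro a ha
    simp only [Finset.mem_filter, Finset.mem_univ, true_and] at ha
    have haβ : ¬ (a : ℕ) < β := by
      by_contra hc
      rw [ext_lt hβ l' a hc] at ha
      omega
    exact Fin.ext (by simp; omega)
  · intro a ha
    exact Fin.ext (by simp)

lemma typeProd_ext {q : ℝ} {n β : ℕ} (hβ : β ≤ n) (l' : Fin (n - β) → ℤ)
    (hl'0 : ∀ k, 0 ≤ l' k) :
    typeProd q (ext β hβ l') = mu q β * typeProd q l' := by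
  have hstep : ∏ v ∈ (Finset.image l' Finset.univ).image (fun w => w + 1),
      mu q ((Finset.univ.filter fun j : Fin n => ext β hβ l' j = v).card)
      = typeProd q l' := by
    rw [Finset.prod_image (fun a _ b _ h => by omega)]
    unfold typeProd
    refine Finset.prod_congr rfl fun v hv => ?_
    obtain ⟨k0, -, hk0⟩ := Finset.mem_image.mp hv
    have hv0 : 0 ≤ v := hk0 ▸ hl'0 k0
    rw [fib_card hβ l' v hv0]
  by_cases hb : β = 0
  · subst hb
    have himg : Finset.image (ext 0 hβ l') Finset.univ
        = (Finset.image l' Finset.univ).image (fun w => w + 1) := by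
      ext v
      simp only [Finset.mem_image, Finset.mem_univ, true_and]
      constructor
      · rintro ⟨j, rfl⟩
        exact ⟨l' ⟨(j : ℕ), j.isLt⟩, ⟨⟨(j : ℕ), j.isLt⟩, rfl⟩,
          (ext_ge' hβ l' j (by omega)).symm⟩
      · rintro ⟨w, ⟨k, rfl⟩, rfl⟩
        refine ⟨⟨(k : ℕ), by omega⟩, ?_⟩
        rw [ext_ge' hβ l' ⟨(k : ℕ), by omega⟩ (by omega)]
        congr 2
        all_goals exact Fin.ext (by simp)
    rw [mu_zero, one_mul]
    calc typeProd q (ext 0 hβ l')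
        = ∏ v ∈ (Finset.image l' Finset.univ).image (fun w => w + 1),
            mu q ((Finset.univ.filter fun j : Fin n => ext 0 hβ l' j = v).card) := by
          rw [typeProd, himg]
      _ = typeProd q l' := hstep
  · have hb1 : 1 ≤ β := by omega
    have hn1 : 0 < n := by omega
    have himg : Finset.image (ext β hβ l') Finset.univ
        = insert 0 ((Finset.image l' Finset.univ).image (fun w => w + 1)) := by
      ext v
      simp only [Finset.mem_image, Finset.mem_univ, true_and, Finset.mem_insert]
      constructor
      · rintro ⟨j, rfl⟩
        by_cases h : (j : ℕ) < β
        · left; exact ext_lt hβ l' j h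
        · right
          exact ⟨l' ⟨(j : ℕ) - β, by omega⟩, ⟨⟨(j : ℕ) - β, by omega⟩, rfl⟩,
            (ext_ge' hβ l' j h).symm⟩
      · rintro (rfl | ⟨w, ⟨k, rfl⟩, rfl⟩)
        · exact ⟨⟨0, hn1⟩, ext_lt hβ l' ⟨0, hn1⟩ (by show 0 < β; omega)⟩
        · refine ⟨⟨β + (k : ℕ), by omega⟩, ext_ge hβ l' k⟩
    have h0notin : (0 : ℤ) ∉ (Finset.image l' Finset.univ).image (fun w => w + 1) := by
      simp only [Finset.mem_image, Finset.mem_univ, true_and, not_exists]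
      rintro w ⟨⟨k, rfl⟩, hw⟩
      have := hl'0 k
      omega
    have hfib0 : ((Finset.univ.filter fun j : Fin n => ext β hβ l' j = 0).card) = β := by
      rw [show (Finset.univ.filter fun j : Fin n => ext β hβ l' j = 0)
          = Finset.univ.filter (fun j : Fin n => (j : ℕ) < β) from
        Finset.filter_congr (fun j _ => by rw [ext_eq_zero_iff hβ l' hl'0 j])]
      exact card_filter_val_lt hβ
    calc typeProd q (ext β hβ l')
        = ∏ v ∈ insert 0 ((Finset.image l' Finset.univ).image (fun w => w + 1)),
            mu q ((Finset.univ.filter fun j : Fin n => ext β hβ l' j = v).card) := by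
          rw [typeProd, himg]
      _ = mu q ((Finset.univ.filter fun j : Fin n => ext β hβ l' j = 0).card)
            * ∏ v ∈ (Finset.image l' Finset.univ).image (fun w => w + 1),
              mu q ((Finset.univ.filter fun j : Fin n => ext β hβ l' j = v).card) :=
          Finset.prod_insert h0notin
      _ = mu q β * typeProd q l' := by rw [hfib0, hstep]

/-! ### Gaussian binomial identity -/

lemma pow_sub_one_ne {q : ℝ} (hq : 1 < q) (k : ℕ) : q ^ (k + 1) - 1 ≠ 0 := by
  have : (1 : ℝ) < q ^ (k + 1) := one_lt_pow₀ hq (Nat.succ_ne_zero k)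
  linarith

lemma gauss_eq {q : ℝ} (hq : 1 < q) {n β : ℕ} (hβ : β ≤ n) :
    mu q n * gaussBinom q n β = mu q β * mu q (n - β) * q ^ (β * (n - β)) := by
  have hq0 : (0 : ℝ) < q := lt_trans one_pos hq
  have hqne : q ≠ 0 := ne_of_gt hq0
  set m := n - β with hm
  have hnm : n = m + β := by omega
  have h1 : mu q n = mu q m * ∏ i ∈ Finset.range β,
      (1 - q⁻¹) / (1 - q ^ (-(((m + i : ℕ) : ℤ)) - 1)) := by
    rw [mu, hnm, Finset.prod_range_add, ← mu]
    congr 1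
    refine Finset.prod_congr rfl fun i _ => ?_
    congr 2
    push_cast
    ring
  have h2 : (q : ℝ) ^ (β * m) = ∏ _i ∈ Finset.range β, q ^ m := by
    rw [Finset.prod_const, Finset.card_range, ← pow_mul, mul_comm]
  have key : (∏ i ∈ Finset.range β, (1 - q⁻¹) / (1 - q ^ (-(((m + i : ℕ) : ℤ)) - 1)))
      * gaussBinom q n β = mu q β * q ^ (β * m) := by
    rw [gaussBinom, mu, h2, ← Finset.prod_mul_distrib, ← Finset.prod_mul_distrib]
    refine Finset.prod_congr rfl fun i hi => ?_
    have hA : q ^ (-(((m + i : ℕ) : ℤ)) - 1) = (q ^ (m + i + 1))⁻¹ := by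
      rw [← zpow_natCast q (m + i + 1), ← zpow_neg]
      congr 1
      push_cast
      ring
    have hB : q ^ (-((i : ℤ) + 1)) = (q ^ (i + 1))⁻¹ := by
      rw [← zpow_natCast q (i + 1), ← zpow_neg]
      all_goals congr 1
      all_goals push_cast
      all_goals ring
    have hApow : (0 : ℝ) < q ^ (m + i + 1) := by positivity
    have hBpow : (0 : ℝ) < q ^ (i + 1) := by positivity
    have hAne : q ^ (m + i + 1) - 1 ≠ 0 := pow_sub_one_ne hq (m + i)
    have hBne : q ^ (i + 1) - 1 ≠ 0 := pow_sub_one_ne hq i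
    rw [hA, hB]
    rw [show n - β + i + 1 = m + i + 1 from by omega]
    field_simp
    ring
  rw [h1, mul_assoc, key]
  ring

/-! ### the term-by-term identity -/

lemma term_eq {q : ℝ} (hq : 1 < q) {n β : ℕ} (hβ : β ≤ n) (l' : Fin (n - β) → ℤ)
    (hl'0 : ∀ k, 0 ≤ l' k) (α : ℤ) :
    q ^ (α * ∑ j, ext β hβ l' j) * weight q (ext β hβ l')
      = gaussBinom q n β * q ^ (α * ((n : ℤ) - (β : ℤ)))
        * (q ^ ((α + β) * ∑ k, l' k) * weight q l') := by
  have hq0 : (0 : ℝ) < q := lt_trans one_pos hq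
  have hqne : q ≠ 0 := ne_of_gt hq0
  have hmc : ((n - β : ℕ) : ℤ) = (n : ℤ) - β := Nat.cast_sub hβ
  have hgauss : gaussBinom q n β = mu q β * mu q (n - β) * q ^ (β * (n - β)) / mu q n := by
    rw [← gauss_eq hq hβ]
    field_simp [mu_ne hq n]
  rw [weight, weight, pairProd_eq hqne, pairProd_eq hqne, typeProd_ext hβ l' hl'0,
    S_ext hβ l', ext_sum hβ l', hgauss]
  rw [show (q : ℝ) ^ (β * (n - β)) = q ^ ((β : ℤ) * ((n : ℤ) - β)) from by
    rw [← zpow_natCast q (β * (n - β))]; congr 1; push_cast [hmc]; ring]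
  rw [hmc]
  set T := typeProd q l'
  set sl := ∑ k, l' k
  set s' := S l'
  rw [show α * (sl + ((n : ℤ) - β)) = α * sl + α * ((n : ℤ) - β) from by ring,
    show (s' + (β : ℤ) * sl + (β : ℤ) * ((n : ℤ) - β))
      = s' + ((β : ℤ) * sl + (β : ℤ) * ((n : ℤ) - β)) from by ring]
  rw [show ((α : ℤ) + (β : ℤ)) * sl = α * sl + (β : ℤ) * sl from by ring]
  rw [zpow_add₀ hqne (α * sl), zpow_add₀ hqne s', zpow_add₀ hqne ((β : ℤ) * sl)]
  field_simp [mu_ne hq n, mu_ne hq (n - β)]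
  rw [zpow_add₀ hqne]
  ring

end VolRec

open VolRec in
/-- **Second recursion for `vol_{n,α}`.** For `q > 1` and all integers `n ≥ 1`, `α`, `x ≥ 1`:
`vol_{n,α}(x) = Σ_{β=0}^{n} binom(n,β)_q · q^{α(n−β)} · vol_{n−β, α+β}(x−1)`. -/
theorem vol_recursion_two (q : ℝ) (hq : 1 < q) (n : ℕ) (hn : 1 ≤ n) (α : ℤ)
    (x : ℕ) (hx : 1 ≤ x) :
    vol q n α x =
      ∑ β ∈ Finset.range (n + 1),
        gaussBinom q n β * q ^ (α * ((n : ℤ) - (β : ℤ))) * vol q (n - β) (α + (β : ℤ)) (x - 1) := by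
  classical
  rw [vol]
  rw [← Finset.sum_fiberwise_of_maps_to (s := tuples n x) (t := Finset.range (n + 1))
    (g := fun l => Z l)
    (fun l _ => Finset.mem_range.mpr (Nat.lt_succ_of_le (Z_le l)))
    (fun l => q ^ (α * ∑ i, l i) * weight q l)]
  refine Finset.sum_congr rfl fun β hβr => ?_
  have hβ : β ≤ n := by rw [Finset.mem_range] at hβr; omega
  rw [vol, Finset.mul_sum]
  have hres_mem : ∀ l ∈ (tuples n x).filter (fun l => Z l = β),
      (fun k : Fin (n - β) => l ⟨β + (k : ℕ), by omega⟩ - 1) ∈ tuples (n - β) (x - 1) := by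
    intro l hl
    rw [Finset.mem_filter] at hl
    obtain ⟨hlt, hZ⟩ := hl
    obtain ⟨hb, hm⟩ := mem_tuples.mp hlt
    have h0 : ∀ i, 0 ≤ l i := fun i => (hb i).1
    rw [mem_tuples]
    constructor
    · intro k
      have hnz : ¬ l ⟨β + (k : ℕ), by omega⟩ = 0 := by
        rw [zero_iff hm h0]
        simp [hZ]
      have h1 := (hb ⟨β + (k : ℕ), by omega⟩).1
      have h2 := (hb ⟨β + (k : ℕ), by omega⟩).2
      omega
    · intro k1 k2 hk
      dsimp only
      have := hm (show (⟨β + (k1 : ℕ), by omega⟩ : Fin n) ≤ ⟨β + (k2 : ℕ), by omega⟩ by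
        rw [Fin.le_def]
        dsimp only
        rw [Fin.le_def] at hk
        omega)
      omega
  have hext_res : ∀ l ∈ (tuples n x).filter (fun l => Z l = β),
      ext β hβ (fun k : Fin (n - β) => l ⟨β + (k : ℕ), by omega⟩ - 1) = l := by
    intro l hl
    rw [Finset.mem_filter] at hl
    obtain ⟨hlt, hZ⟩ := hl
    obtain ⟨hb, hm⟩ := mem_tuples.mp hlt
    have h0 : ∀ i, 0 ≤ l i := fun i => (hb i).1
    funext j
    by_cases h : (j : ℕ) < β
    · rw [ext_lt hβ _ j h]
      symm
      rw [zero_iff hm h0, hZ]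
      exact h
    · rw [ext_ge' hβ _ j h]
      dsimp only
      have hjj : (⟨β + ((j : ℕ) - β), by omega⟩ : Fin n) = j := Fin.ext (by simp; omega)
      rw [hjj]
      omega
  have hres_ext : ∀ l' ∈ tuples (n - β) (x - 1),
      (fun k : Fin (n - β) => ext β hβ l' ⟨β + (k : ℕ), by omega⟩ - 1) = l' := by
    intro l' hl'
    funext k
    rw [ext_ge hβ l' k]
    omega
  refine Finset.sum_bij'
    (i := fun l _ => fun k : Fin (n - β) => l ⟨β + (k : ℕ), by omega⟩ - 1)
    (j := fun (l' : Fin (n - β) → ℤ) _ => ext β hβ l')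
    hres_mem
    (fun l' hl' => Finset.mem_filter.mpr
      ⟨ext_mem hβ hx hl', Z_ext hβ l' (fun k => ((mem_tuples.mp hl').1 k).1)⟩)
    hext_res
    hres_ext
    ?_
  intro l hl
  have hrm := hres_mem l hl
  have h0 : ∀ k : Fin (n - β), 0 ≤ l ⟨β + (k : ℕ), by omega⟩ - 1 :=
    fun k => ((mem_tuples.mp hrm).1 k).1
  conv_lhs => rw [← hext_res l hl]
  rw [term_eq hq hβ _ h0 α]
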